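/- Let N : ℕ → ℕ → ℕ satisfy the recurrence N(ℓ,1) = 1 for all ℓ ≥ 1; N(1,m) = m − 1 for all m ≥ 2; N(ℓ,m) = N(m,m) for all ℓ > m ≥ 2; and N(ℓ,m) = ∑_{j=1}^{m−1} N(ℓ−1,j) for all 2 ≤ ℓ ≤ m. Then for all ℓ ≥ 1 and m ≥ 1: N(ℓ,m) = 1 if m = 1; N(ℓ,m) = 2^(m−2) if m ≥ 2 and ℓ ≥ m − 1; and N(ℓ,m) = ∑_{j=0}^{ℓ} C(m−2, j) if m ≥ 2 and 1 ≤ ℓ ≤ m − 2, where C(·,·) denotes the binomial coefficient. -/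

import Mathlib

private def fcap (L n : ℕ) : ℕ := ∑ i ∈ Finset.range (min L n + 1), n.choose i

private lemma pascal_sum (n t : ℕ) :
    ∑ i ∈ Finset.range (t+1), (n+1).choose i
      = ∑ i ∈ Finset.range (t+1), n.choose i + ∑ i ∈ Finset.range t, n.choose i := by
  induction t with
  | zero => simp
  | succ t ih =>
    rw [Finset.sum_range_succ, ih, Nat.choose_succ_succ,
      Finset.sum_range_succ (f := fun i => n.choose i) (n := t+1),
      Finset.sum_range_succ (f := fun i => n.choose i) (n := t)]
    simp only [Nat.succ_eq_add_one]
    omega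

private lemma sumf (L n : ℕ) : 1 + ∑ k ∈ Finset.range n, fcap L k = fcap (L+1) n := by
  induction n with
  | zero => simp [fcap]
  | succ n ih =>
    rw [Finset.sum_range_succ, ← Nat.add_assoc, ih]
    by_cases h : n ≤ L
    · have h1 : min (L+1) n = n := by omega
      have h2 : min L n = n := by omega
      have h3 : min (L+1) (n+1) = n+1 := by omega
      simp only [fcap, h1, h2, h3]
      rw [Nat.sum_range_choose, Nat.sum_range_choose, pow_succ]
      omega
    · have h1 : min (L+1) n = L+1 := by omega
      have h2 : min L n = L := by omega
      have h3 : min (L+1) (n+1) = L+1 := by omega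
      simp only [fcap, h1, h2, h3]
      rw [pascal_sum n (L+1)]

theorem capacity_formula
    (N : ℕ → ℕ → ℕ)
    (h1 : ∀ l, 1 ≤ l → N l 1 = 1)
    (h2 : ∀ m, 2 ≤ m → N 1 m = m - 1)
    (h3 : ∀ l m, 2 ≤ m → m < l → N l m = N m m)
    (h4 : ∀ l m, 2 ≤ l → l ≤ m → N l m = ∑ j ∈ Finset.Icc 1 (m - 1), N (l - 1) j) :
    ∀ l, 1 ≤ l → ∀ m, 1 ≤ m →
      (m = 1 → N l m = 1) ∧
      (2 ≤ m → m - 1 ≤ l → N l m = 2 ^ (m - 2)) ∧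
      (2 ≤ m → 1 ≤ l → l ≤ m - 2 →
        N l m = ∑ j ∈ Finset.range (l + 1), Nat.choose (m - 2) j) := by
  have key : ∀ l, 1 ≤ l → ∀ m, 2 ≤ m → N l m = fcap l (m - 2) := by
    intro l
    induction l using Nat.strong_induction_on with
    | _ l ih =>
      intro hl m hm
      rcases Nat.lt_or_ge l 2 with hl2 | hl2
      · -- l = 1
        have hl1 : l = 1 := by omega
        subst hl1
        rw [h2 m hm]
        rcases Nat.lt_or_ge m 3 with hm3 | hm3
        · have : m = 2 := by omega
          subst this; simp [fcap]
        · have h1' : min 1 (m-2) = 1 := by omega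
          simp only [fcap, h1']
          rw [Finset.sum_range_succ, Finset.sum_range_succ]
          simp [Nat.choose_one_right]
          omega
      · rcases Nat.lt_or_ge m l with hml | hlm
        · -- m < l : N l m = N m m
          rw [h3 l m hm hml, ih m hml (by omega) m hm]
          have e1 : min m (m-2) = m-2 := by omega
          have e2 : min l (m-2) = m-2 := by omega
          simp only [fcap, e1, e2]
        · -- l ≤ m
          rw [h4 l m hl2 hlm]
          have hIco : Finset.Icc 1 (m-1) = Finset.Ico 1 m := by
            rw [← Finset.Ico_add_one_right_eq_Icc]
            congr 1
            omega
          rw [hIco, Finset.sum_Ico_eq_sum_range]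
          have hm1 : m - 1 = (m - 2) + 1 := by omega
          rw [hm1, Finset.sum_range_succ']
          have g0 : N (l-1) (1 + 0) = 1 := h1 (l-1) (by omega)
          rw [g0]
          have gstep : ∀ i ∈ Finset.range (m-2), N (l-1) (1 + (i+1)) = fcap (l-1) i := by
            intro i _
            have h := ih (l-1) (by omega) (by omega) (1 + (i+1)) (by omega)
            rw [show 1 + (i+1) - 2 = i from by omega] at h
            exact h
          rw [Finset.sum_congr rfl gstep]
          have := sumf (l-1) (m-2)
          have hll : l - 1 + 1 = l := by omega
          rw [hll] at this
          rw [add_comm]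
          exact this
  intro l hl m hm
  refine ⟨?_, ?_, ?_⟩
  · intro hm1; subst hm1; exact h1 l hl
  · intro hm2 hml
    rw [key l hl m hm2]
    have e : min l (m-2) = m-2 := by omega
    simp only [fcap, e]
    have : m - 2 + 1 = m - 1 := by omega
    rw [Nat.sum_range_choose]
  · intro hm2 hl1 hlm
    rw [key l hl m hm2]
    have e : min l (m-2) = l := by omega
    simp only [fcap, e]
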